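/- arXiv:1803.05816 — 6 statements merged into one kernel-verified Lean document; each statement's English description precedes it below -/
import Mathlib

section
/- Let k be an algebraically closed field, let n ≥ 1 and let p ∈ k[X_1,…,X_n]. Suppose that p is invariant under every matrix M ∈ SL_n(k). Then for every commutative k-algebra A and every matrix M ∈ SL_n(A), the image of p under the canonical map k[X_1,…,X_n] → A[X_1,…,X_n] is invariant under M. (This is the paper's Proposition on invariants over algebraically closed fields, B^G = B^{G(k)}, in the case of the smooth affine algebraic group G = SL_{n,k} acting linearly on a polynomial ring.) -/
open MvPolynomial

variable {k : Type} [Field k]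

/-- The determinant polynomial of the generic matrix. -/
noncomputable def detPoly (n : ℕ) (k : Type) [Field k] : MvPolynomial (Fin n × Fin n) k :=
  Matrix.det (Matrix.of fun i j => (X (i, j) : MvPolynomial (Fin n × Fin n) k))

theorem eval_detPoly {n : ℕ} {R : Type} [CommRing R] (φ : MvPolynomial (Fin n × Fin n) k →+* R)
    : φ (detPoly n k) = Matrix.det (Matrix.of fun i j => φ (X (i, j))) := by
  rw [detPoly, RingHom.map_det]
  rfl

theorem detPoly_ne_zero {n : ℕ} : (detPoly n k) ≠ 0 := by
  intro h
  have h1 : eval (fun s : Fin n × Fin n => if s.1 = s.2 then (1:k) else 0) (detPoly n k) = 1 := by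
    rw [eval_detPoly]
    have : (Matrix.of fun i j => (eval fun s : Fin n × Fin n => if s.1 = s.2 then (1:k) else 0)
        (X (i, j))) = (1 : Matrix (Fin n) (Fin n) k) := by
      ext i j
      simp [Matrix.one_apply]
    rw [this, Matrix.det_one]
  rw [h] at h1
  simp at h1


set_option maxHeartbeats 1000000 in
theorem mem_span_detPoly_sub_one {n : ℕ} [IsAlgClosed k] (hn : 1 ≤ n)
    (f : MvPolynomial (Fin n × Fin n) k)
    (hf : ∀ M : Matrix (Fin n) (Fin n) k, M.det = 1 → eval (fun s => M s.1 s.2) f = 0) :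
    f ∈ Ideal.span {detPoly n k - 1} := by
  classical
  set D := detPoly n k with hD
  set t : MvPolynomial ((Fin n × Fin n) ⊕ Unit) k := X (Sum.inr ()) with ht
  set Ds : MvPolynomial ((Fin n × Fin n) ⊕ Unit) k := rename Sum.inl D with hDsdef
  have hDs : Ds = Matrix.det (Matrix.of fun i j =>
      (X (Sum.inl (i, j)) : MvPolynomial ((Fin n × Fin n) ⊕ Unit) k)) := by
    rw [hDsdef]
    rw [show ((rename Sum.inl : MvPolynomial (Fin n × Fin n) k →ₐ[k]
          MvPolynomial ((Fin n × Fin n) ⊕ Unit) k) D)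
        = (rename (Sum.inl : (Fin n × Fin n) → (Fin n × Fin n) ⊕ Unit) :
            MvPolynomial (Fin n × Fin n) k →ₐ[k]
            MvPolynomial ((Fin n × Fin n) ⊕ Unit) k).toRingHom D from rfl]
    rw [hD, eval_detPoly]
    congr 1
    ext i j
    simp [rename_X]
  set I : Ideal (MvPolynomial ((Fin n × Fin n) ⊕ Unit) k) := Ideal.span {t * Ds - 1} with hI
  set col0 : Fin n := ⟨0, hn⟩
  set g : (Fin n × Fin n) → MvPolynomial ((Fin n × Fin n) ⊕ Unit) k :=
    fun s => if s.2 = col0 then t * X (Sum.inl s) else X (Sum.inl s) with hg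
  set f' : MvPolynomial ((Fin n × Fin n) ⊕ Unit) k := eval₂ C g f with hf'
  -- the localization
  haveI : IsDomain (Localization.Away D) := IsLocalization.isDomain_localization
    (powers_le_nonZeroDivisors_of_noZeroDivisors (detPoly_ne_zero))
  set g' : (Fin n × Fin n) ⊕ Unit → Localization.Away D := fun s => Sum.rec
    (fun s => algebraMap (MvPolynomial (Fin n × Fin n) k) (Localization.Away D) (X s))
    (fun _ => IsLocalization.Away.invSelf D) s with hg'
  set φ : MvPolynomial ((Fin n × Fin n) ⊕ Unit) k →+* Localization.Away D :=
    eval₂Hom ((algebraMap (MvPolynomial (Fin n × Fin n) k) (Localization.Away D)).comp C) g'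
    with hφ
  have hφDs : φ Ds = algebraMap (MvPolynomial (Fin n × Fin n) k) (Localization.Away D) D := by
    have hrhs : algebraMap (MvPolynomial (Fin n × Fin n) k) (Localization.Away D) D
        = Matrix.det (Matrix.of fun i j =>
          algebraMap (MvPolynomial (Fin n × Fin n) k) (Localization.Away D) (X (i, j))) :=
      eval_detPoly _
    rw [hDs, RingHom.map_det, hrhs]
    congr 1
    ext i j
    simp [hφ, hg', RingHom.mapMatrix_apply, Matrix.map_apply]
  have hφt : φ t = IsLocalization.Away.invSelf D := by
    rw [hφ, ht, eval₂Hom_X']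
  have hφgen : φ (t * Ds - 1) = 0 := by
    rw [map_sub, map_mul, hφDs, hφt, map_one, mul_comm,
      IsLocalization.Away.mul_invSelf, sub_self]
  -- the map back from the localization
  set mkI := Ideal.Quotient.mk I with hmkI
  set β : MvPolynomial (Fin n × Fin n) k →+* MvPolynomial ((Fin n × Fin n) ⊕ Unit) k ⧸ I :=
    mkI.comp (rename Sum.inl : MvPolynomial (Fin n × Fin n) k →ₐ[k]
      MvPolynomial ((Fin n × Fin n) ⊕ Unit) k).toRingHom with hβ
  have hβD : β D * mkI t = 1 := by
    have h0 : β D = mkI Ds := rfl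
    rw [h0, ← map_mul, ← map_one mkI, hmkI, Ideal.Quotient.mk_eq_mk_iff_sub_mem]
    rw [show Ds * t - 1 = t * Ds - 1 by ring]
    exact Ideal.subset_span rfl
  have hβDu : IsUnit (β D) := IsUnit.of_mul_eq_one _ hβD
  set γ : Localization.Away D →+* MvPolynomial ((Fin n × Fin n) ⊕ Unit) k ⧸ I :=
    IsLocalization.Away.lift D hβDu with hγ
  have hγa : ∀ a : MvPolynomial (Fin n × Fin n) k,
      γ (algebraMap (MvPolynomial (Fin n × Fin n) k) (Localization.Away D) a) = β a :=
    fun a => IsLocalization.Away.lift_eq D hβDu a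
  have hγinv : γ (IsLocalization.Away.invSelf D) = mkI t := by
    have h1 : β D * γ (IsLocalization.Away.invSelf D) = 1 := by
      rw [← hγa D, ← map_mul, IsLocalization.Away.mul_invSelf, map_one]
    calc γ (IsLocalization.Away.invSelf D)
        = (β D * mkI t) * γ (IsLocalization.Away.invSelf D) := by rw [hβD, one_mul]
      _ = mkI t * (β D * γ (IsLocalization.Away.invSelf D)) := by ring
      _ = mkI t := by rw [h1, mul_one]
  have hcomp : γ.comp φ = mkI := by
    apply MvPolynomial.ringHom_ext
    · intro a
      rw [RingHom.comp_apply, hφ, eval₂Hom_C, RingHom.comp_apply, hγa]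
      simp [hβ, rename_C]
    · rintro (s | s) <;> rw [RingHom.comp_apply, hφ, eval₂Hom_X']
      · rw [show g' (Sum.inl s) = algebraMap (MvPolynomial (Fin n × Fin n) k)
            (Localization.Away D) (X s) from rfl, hγa]
        simp [hβ, rename_X]
      · rw [show g' (Sum.inr s) = IsLocalization.Away.invSelf D from rfl, hγinv]
  have hIker : I = RingHom.ker φ := by
    apply le_antisymm
    · rw [hI, Ideal.span_le, Set.singleton_subset_iff]
      exact hφgen
    · intro x hx
      have h2 : mkI x = γ (φ x) := by rw [← RingHom.comp_apply, hcomp]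
      rw [RingHom.mem_ker] at hx
      rw [hx, map_zero] at h2
      rwa [hmkI, Ideal.Quotient.eq_zero_iff_mem] at h2
  have hIprime : I.IsPrime := by rw [hIker]; exact RingHom.ker_isPrime φ
  -- f' vanishes on the zero locus of I
  have hvan : f' ∈ vanishingIdeal k (zeroLocus k I) := by
    rw [mem_vanishingIdeal_iff]
    intro x hx
    show eval x f' = 0
    have hxI : eval x (t * Ds - 1) = 0 :=
      (mem_zeroLocus_iff.mp hx) _ (Ideal.subset_span rfl)
    set M₀ : Matrix (Fin n) (Fin n) k := Matrix.of fun i j => x (Sum.inl (i, j)) with hM₀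
    have hevDs : eval x Ds = M₀.det := by
      rw [hDs, RingHom.map_det]
      congr 1
      ext i j
      simp [hM₀, RingHom.mapMatrix_apply, Matrix.map_apply]
    have hdet : x (Sum.inr ()) * M₀.det = 1 := by
      have h3 := hxI
      rw [map_sub, map_mul, map_one, sub_eq_zero, hevDs] at h3
      simpa [ht] using h3
    set N : Matrix (Fin n) (Fin n) k := Matrix.of fun i j => eval x (g (i, j)) with hN
    have hNdet : N.det = 1 := by
      have hNeq : N = Matrix.updateCol M₀ col0 (x (Sum.inr ()) • fun i => M₀ i col0) := by
        ext i j
        rw [Matrix.updateCol_apply]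
        by_cases h : j = col0 <;> simp [hN, hg, h, hM₀, ht]
      rw [hNeq, Matrix.det_updateCol_smul, Matrix.updateCol_eq_self]
      exact hdet
    have hcompev : eval x f' = eval (fun s => eval x (g s)) f := by
      rw [hf', eval₂_comp_left (eval x) C g f]
      rw [show (eval x).comp (C : k →+* MvPolynomial ((Fin n × Fin n) ⊕ Unit) k)
        = RingHom.id k by ext a; simp]
      rfl
    rw [hcompev]
    have h4 := hf N hNdet
    simpa [hN] using h4
  have hf'I : f' ∈ I := by
    have h5 := vanishingIdeal_zeroLocus_eq_radical (K := k) I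
    rw [hIprime.radical] at h5
    rw [← h5]
    exact hvan
  -- push down to the quotient by (D - 1)
  set J : Ideal (MvPolynomial (Fin n × Fin n) k) := Ideal.span {D - 1} with hJ
  set mkJ := Ideal.Quotient.mk J with hmkJ
  set χ : MvPolynomial ((Fin n × Fin n) ⊕ Unit) k →+* MvPolynomial (Fin n × Fin n) k ⧸ J :=
    eval₂Hom (mkJ.comp C)
    (fun s => Sum.rec (fun s => mkJ (X s)) (fun _ => 1) s) with hχ
  have hχDs : χ Ds = mkJ D := by
    have hrhs : mkJ D = Matrix.det (Matrix.of fun i j => mkJ (X (i, j))) := eval_detPoly _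
    rw [hDs, RingHom.map_det, hrhs]
    congr 1
    ext i j
    simp [hχ, RingHom.mapMatrix_apply, Matrix.map_apply]
  have hχgen : χ (t * Ds - 1) = 0 := by
    rw [map_sub, map_mul, hχDs, map_one]
    have h6 : χ t = 1 := by rw [hχ, ht, eval₂Hom_X']
    rw [h6, one_mul, ← map_one mkJ, ← map_sub, hmkJ, Ideal.Quotient.eq_zero_iff_mem]
    exact Ideal.subset_span rfl
  have hχf' : χ f' = 0 := by
    have hle : I ≤ RingHom.ker χ := by
      rw [hI, Ideal.span_le, Set.singleton_subset_iff, SetLike.mem_coe, RingHom.mem_ker]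
      exact hχgen
    exact RingHom.mem_ker.mp (hle hf'I)
  have hχf'2 : χ f' = mkJ f := by
    rw [hf', eval₂_comp_left χ C g f]
    have h1 : χ.comp (C : k →+* MvPolynomial ((Fin n × Fin n) ⊕ Unit) k) = mkJ.comp C := by
      ext a; simp [hχ]
    have h2 : (χ ∘ g) = fun s => mkJ (X s) := by
      funext s
      by_cases h : s.2 = col0 <;> simp [hg, h, hχ, ht]
    rw [h1, h2]
    rw [show (fun s : Fin n × Fin n => mkJ (X s)) = mkJ ∘ X from rfl,
      ← eval₂_comp_left mkJ C X f, eval₂_eta]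
  rw [hχf'2] at hχf'
  rwa [hmkJ, Ideal.Quotient.eq_zero_iff_mem] at hχf'

theorem commA {n : ℕ} {R S : Type} [CommRing R] [CommRing S] (φ : R →+* S)
    (N : Fin n → Fin n → R) (q : MvPolynomial (Fin n) R) :
    map φ (eval₂ C (fun i => ∑ j, C (N i j) * X j) q)
      = eval₂ C (fun i => ∑ j, C (φ (N i j)) * X j) (map φ q) := by
  have h : (map φ).comp (eval₂Hom C (fun i => ∑ j, C (N i j) * X j))
      = (eval₂Hom C (fun i => ∑ j, C (φ (N i j)) * X j)).comp (map φ) := by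
    apply MvPolynomial.ringHom_ext
    · intro a; simp
    · intro i; simp [map_sum]
  exact RingHom.congr_fun h q

set_option maxHeartbeats 1000000 in
/-- Invariance of a polynomial under `SL n k`, for `k` algebraically closed, implies
invariance under `SL n A` for every commutative `k`-algebra `A`. -/
theorem sl_invariant_of_invariant_over_algClosed
    {k : Type} [Field k] [IsAlgClosed k] (n : ℕ) (hn : 1 ≤ n)
    (p : MvPolynomial (Fin n) k)
    (hp : ∀ M : Matrix.SpecialLinearGroup (Fin n) k,
      aeval (fun i => ∑ j, C (M.1 i j) * X j) p = p) :
    ∀ (A : Type) [CommRing A] [Algebra k A],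
      ∀ M : Matrix.SpecialLinearGroup (Fin n) A,
        aeval (fun i => ∑ j, C (M.1 i j) * X j) (map (algebraMap k A) p)
          = map (algebraMap k A) p := by
  intro A _ _ M
  classical
  set R := MvPolynomial (Fin n × Fin n) k with hR
  set G : Fin n → Fin n → R := fun i j => X (i, j) with hG
  set q : MvPolynomial (Fin n) R :=
    eval₂ C (fun i => ∑ j, C (G i j) * X j) (map (C : k →+* R) p) - map (C : k →+* R) p with hq
  -- coefficients of q vanish on SL_n(k)
  have hcoeff : ∀ m, coeff m q ∈ Ideal.span {detPoly n k - 1} := by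
    intro m
    apply mem_span_detPoly_sub_one hn
    intro M₀ hM₀
    set x : (Fin n × Fin n) → k := fun s => M₀ s.1 s.2 with hx
    have hqmap : map (eval x) q = 0 := by
      rw [hq, map_sub, commA]
      have h1 : map (eval x) (map (C : k →+* R) p) = p := by
        rw [map_map, show ((eval x).comp (C : k →+* R)) = RingHom.id k by ext a; simp,
          map_id]
      rw [h1]
      have h2 : (fun i => ∑ j, C (eval x (G i j)) * X j)
          = fun i => ∑ j, C (M₀ i j) * (X j : MvPolynomial (Fin n) k) := by
        funext i
        simp [hG, hx]
      have h3 := hp ⟨M₀, hM₀⟩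
      rw [aeval_def, algebraMap_eq] at h3
      rw [h2]
      simp only [hG, hx, eval_X] at h3 ⊢
      rw [h3, sub_self]
    have := congrArg (coeff m) hqmap
    rwa [coeff_map, coeff_zero] at this
  -- now specialize at M over A
  set ε : R →+* A := eval₂Hom (algebraMap k A) (fun s => M.1 s.1 s.2) with hε
  have hεdet : ε (detPoly n k) = 1 := by
    rw [eval_detPoly]
    have h4 : (Matrix.of fun i j => ε (X (i, j))) = M.1 := by
      ext i j
      show ε (X (i, j)) = M.1 i j
      rw [hε, eval₂Hom_X']
    rw [h4]
    exact M.2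
  have hεq : map ε q = 0 := by
    apply MvPolynomial.ext
    intro m
    rw [coeff_map, coeff_zero]
    obtain ⟨c, hc⟩ := Ideal.mem_span_singleton'.mp (hcoeff m)
    rw [← hc, map_mul, map_sub, map_one, hεdet, sub_self, mul_zero]
  have hfin : map ε q = aeval (fun i => ∑ j, C (M.1 i j) * X j) (map (algebraMap k A) p)
      - map (algebraMap k A) p := by
    have hcomp2 : ε.comp (C : k →+* R) = algebraMap k A := by
      apply RingHom.ext; intro a; rw [RingHom.comp_apply, hε, eval₂Hom_C]
    have h6 : (fun i => ∑ j, C (ε (G i j)) * (X j : MvPolynomial (Fin n) A))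
        = fun i => ∑ j, C ((M.1 : Matrix (Fin n) (Fin n) A) i j) * X j := by
      funext i
      refine Finset.sum_congr rfl fun j _ => ?_
      rw [hG, hε, eval₂Hom_X']
    rw [hq, map_sub, commA, map_map, hcomp2, h6, aeval_def, algebraMap_eq]
  rw [hfin] at hεq
  exact sub_eq_zero.mp hεq
end

section
/- Let R be an integral domain with fraction field K, and fix an algebraic closure K̄ of K. Let n ≥ 1 and let p ∈ R[X_1,…,X_n]. Then the following are equivalent: (i) for every commutative R-algebra A and every matrix M ∈ SL_n(A), the image of p in A[X_1,…,X_n] is invariant under M; (ii) the image of p under the canonical map R[X_1,…,X_n] → K̄[X_1,…,X_n] is invariant under every matrix M ∈ SL_n(K̄). (This is the paper's Corollary on invariants over an integral domain, in the case of the smooth affine algebraic group G = SL_{n,R} acting linearly on a polynomial ring, which is a free hence flat R-algebra.) -/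
open MvPolynomial

namespace SLAux

variable (R : Type) [CommRing R]

noncomputable def Ym (n : ℕ) : Matrix (Fin n) (Fin n) (MvPolynomial (Fin n × Fin n) R) :=
  Matrix.of fun i j => X (i, j)

noncomputable def dt (n : ℕ) : MvPolynomial (Fin n × Fin n) R := (Ym R n).det

noncomputable def uu (n : ℕ) : Localization.Away (dt R n) :=
  IsLocalization.Away.invSelf (dt R n)

lemma mul_uu (n : ℕ) :
    algebraMap _ (Localization.Away (dt R n)) (dt R n) * uu R n = 1 :=
  IsLocalization.Away.mul_invSelf _

noncomputable def Nm {n : ℕ} (hn : 1 ≤ n) : Matrix (Fin n) (Fin n) (Localization.Away (dt R n)) :=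
  Matrix.of fun i j =>
    (if i = (⟨0, hn⟩ : Fin n) then uu R n else 1) *
      algebraMap (MvPolynomial (Fin n × Fin n) R) (Localization.Away (dt R n)) (X (i, j))

lemma Nm_det {n : ℕ} (hn : 1 ≤ n) : (Nm R hn).det = 1 := by
  have hEq : Nm R hn =
      Matrix.updateRow ((Ym R n).map (algebraMap _ (Localization.Away (dt R n))))
        (⟨0, hn⟩ : Fin n)
        (uu R n • (((Ym R n).map (algebraMap _ (Localization.Away (dt R n)))) (⟨0, hn⟩ : Fin n))) := by
    ext i j
    by_cases hi : i = (⟨0, hn⟩ : Fin n) <;>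
      simp [Nm, Ym, Matrix.updateRow_apply, hi, Matrix.map_apply, smul_eq_mul]
  have hdm : ((Ym R n).map (algebraMap (MvPolynomial (Fin n × Fin n) R)
      (Localization.Away (dt R n)))).det
      = algebraMap (MvPolynomial (Fin n × Fin n) R) (Localization.Away (dt R n)) (dt R n) :=
    (RingHom.map_det _ _).symm
  rw [hEq, Matrix.det_updateRow_smul, Matrix.updateRow_eq_self, hdm, mul_comm]
  exact mul_uu R n

lemma aeval_dt {n : ℕ} {T : Type} [CommRing T] [Algebra R T] (y : Fin n × Fin n → T) :
    aeval y (dt R n) = (Matrix.of fun i j : Fin n => y (i, j)).det := by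
  rw [dt, AlgHom.map_det]
  congr 1
  ext i j
  simp [Ym]

lemma map_aeval_lin {n : ℕ} {B A : Type} [CommRing B] [CommRing A] (φ : B →+* A)
    (N : Fin n → Fin n → B) (q : MvPolynomial (Fin n) B) :
    map φ (aeval (fun i => ∑ j, C (N i j) * X j) q)
      = aeval (fun i => ∑ j, C (φ (N i j)) * X j) (map φ q) := by
  rw [aeval_def, aeval_def, algebraMap_eq, algebraMap_eq, map_eval₂]
  congr 1
  funext i
  simp

lemma key {R : Type} [CommRing R] [IsDomain R]
    (K Kbar : Type) [Field K] [Algebra R K] [IsFractionRing R K]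
    [Field Kbar] [Algebra K Kbar] [IsAlgClosure K Kbar] [Algebra R Kbar] [IsScalarTower R K Kbar]
    {n : ℕ} (hn : 1 ≤ n) (p : MvPolynomial (Fin n) R)
    (h : ∀ M : Matrix.SpecialLinearGroup (Fin n) Kbar,
        aeval (fun i => ∑ j, C (M.1 i j) * X j) (map (algebraMap R Kbar) p)
          = map (algebraMap R Kbar) p) :
    aeval (fun i => ∑ j, C (Nm R hn i j) * X j)
        (map ((algebraMap (MvPolynomial (Fin n × Fin n) R)
          (Localization.Away (dt R n))).comp (algebraMap R (MvPolynomial (Fin n × Fin n) R))) p)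
      = map ((algebraMap (MvPolynomial (Fin n × Fin n) R)
          (Localization.Away (dt R n))).comp (algebraMap R (MvPolynomial (Fin n × Fin n) R))) p := by
  haveI : IsAlgClosed Kbar := IsAlgClosure.isAlgClosed K
  set ρ : R →+* MvPolynomial (Fin n × Fin n) R := algebraMap R _ with hρ
  set ι : MvPolynomial (Fin n × Fin n) R →+* Localization.Away (dt R n) := algebraMap _ _ with hι
  rw [← sub_eq_zero]
  set q : MvPolynomial (Fin n) (Localization.Away (dt R n)) :=
    aeval (fun i => ∑ j, C (Nm R hn i j) * X j) (map (ι.comp ρ) p) - map (ι.comp ρ) p with hq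
  ext m
  rw [coeff_zero]
  obtain ⟨⟨s, t⟩, hst⟩ := IsLocalization.surj (M := Submonoid.powers (dt R n)) (coeff m q)
  suffices hs0 : s = 0 by
    rw [hs0, map_zero] at hst
    exact ((IsLocalization.map_units (Localization.Away (dt R n)) t).mul_left_eq_zero).mp hst
  have hinj : Function.Injective (algebraMap R Kbar) := by
    rw [IsScalarTower.algebraMap_eq R K Kbar]
    exact (algebraMap K Kbar).injective.comp (IsFractionRing.injective R K)
  apply MvPolynomial.map_injective (algebraMap R Kbar) hinj
  rw [map_zero]
  set s' : MvPolynomial (Fin n × Fin n) Kbar := map (algebraMap R Kbar) s with hs'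
  set d' : MvPolynomial (Fin n × Fin n) Kbar := map (algebraMap R Kbar) (dt R n) with hd'
  have hd'ne : d' ≠ 0 := by
    intro h0
    have h1 := congrArg (eval (fun k : Fin n × Fin n => if k.1 = k.2 then (1 : Kbar) else 0)) h0
    rw [hd', eval_map, ← aeval_def, aeval_dt] at h1
    have h2 : (Matrix.of fun i j : Fin n =>
        if (i, j).1 = (i, j).2 then (1 : Kbar) else 0) = (1 : Matrix (Fin n) (Fin n) Kbar) := by
      ext i j
      simp [Matrix.one_apply]
    rw [h2, Matrix.det_one] at h1
    simp at h1
  have hmul : s' * d' = 0 := by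
    apply MvPolynomial.funext
    intro y₀
    rw [map_zero, map_mul]
    by_cases h0 : (Matrix.of fun i j : Fin n => y₀ (i, j)).det = 0
    · have : eval y₀ d' = 0 := by
        rw [hd', eval_map, ← aeval_def, aeval_dt, h0]
      rw [this, mul_zero]
    · -- main case: the point y₀ gives a matrix with nonzero determinant
      have hψd : (aeval y₀ : MvPolynomial (Fin n × Fin n) R →ₐ[R] Kbar) (dt R n)
          = (Matrix.of fun i j : Fin n => y₀ (i, j)).det := aeval_dt R y₀
      have hunit : IsUnit (((aeval y₀ : MvPolynomial (Fin n × Fin n) R →ₐ[R] Kbar) :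
          MvPolynomial (Fin n × Fin n) R →+* Kbar) (dt R n)) := by
        rw [show (((aeval y₀ : MvPolynomial (Fin n × Fin n) R →ₐ[R] Kbar) :
          MvPolynomial (Fin n × Fin n) R →+* Kbar) (dt R n)) = (aeval y₀) (dt R n) from rfl, hψd]
        exact isUnit_iff_ne_zero.mpr h0
      set e : Localization.Away (dt R n) →+* Kbar := IsLocalization.Away.lift (dt R n) hunit with he
      have he_alg : ∀ w, e (ι w) = aeval y₀ w := fun w => IsLocalization.Away.lift_eq _ hunit w
      have hdet1 : ((Nm R hn).map e).det = 1 := by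
        have : e ((Nm R hn).det) = ((Nm R hn).map e).det := RingHom.map_det e (Nm R hn)
        rw [← this, Nm_det, map_one]
      have hinv := h ⟨(Nm R hn).map e, hdet1⟩
      have hcomp : e.comp (ι.comp ρ) = algebraMap R Kbar := by
        ext r
        simp only [RingHom.comp_apply, hρ]
        rw [he_alg]
        simp [algebraMap_eq]
      have hq0 : map e q = 0 := by
        rw [hq, map_sub, map_aeval_lin e (Nm R hn), map_map, hcomp, sub_eq_zero]
        exact hinv
      have hc : e (coeff m q) = 0 := by
        rw [← coeff_map, hq0, coeff_zero]
      have := congrArg e hst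
      rw [RingHom.map_mul, hc, zero_mul, he_alg] at this
      have hs'eval : eval y₀ s' = 0 := by
        rw [hs', eval_map, ← aeval_def]
        exact this.symm
      rw [hs'eval, zero_mul]
  rcases mul_eq_zero.mp hmul with h1 | h1
  · exact h1
  · exact absurd h1 hd'ne

end SLAux

open SLAux

/-- For an integral domain `R` with fraction field `K` and algebraic closure `K̄` of `K`,
a polynomial over `R` is invariant under `SL_n(A)` for every commutative `R`-algebra `A`
if and only if its image over `K̄` is invariant under `SL_n(K̄)`. -/
theorem sl_invariant_iff_invariant_over_algClosure
    {R : Type} [CommRing R] [IsDomain R]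
    (K : Type) [Field K] [Algebra R K] [IsFractionRing R K]
    (Kbar : Type) [Field Kbar] [Algebra K Kbar] [IsAlgClosure K Kbar]
    [Algebra R Kbar] [IsScalarTower R K Kbar]
    (n : ℕ) (hn : 1 ≤ n) (p : MvPolynomial (Fin n) R) :
    (∀ (A : Type) [CommRing A] [Algebra R A],
        ∀ M : Matrix.SpecialLinearGroup (Fin n) A,
          aeval (fun i => ∑ j, C (M.1 i j) * X j) (map (algebraMap R A) p)
            = map (algebraMap R A) p)
    ↔ (∀ M : Matrix.SpecialLinearGroup (Fin n) Kbar,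
        aeval (fun i => ∑ j, C (M.1 i j) * X j) (map (algebraMap R Kbar) p)
          = map (algebraMap R Kbar) p) := by
  constructor
  · intro h
    exact h Kbar
  · intro h A _ _ M
    set ψ : MvPolynomial (Fin n × Fin n) R →ₐ[R] A :=
      aeval (fun k : Fin n × Fin n => M.1 k.1 k.2) with hψ
    have hψd : ψ (dt R n) = 1 := by
      rw [hψ, aeval_dt]
      have : (Matrix.of fun i j : Fin n => M.1 i j) = M.1 := rfl
      rw [this, M.2]
    have hunit : IsUnit ((ψ : MvPolynomial (Fin n × Fin n) R →+* A) (dt R n)) := by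
      rw [show ((ψ : MvPolynomial (Fin n × Fin n) R →+* A) (dt R n)) = ψ (dt R n) from rfl, hψd]
      exact isUnit_one
    set e : Localization.Away (dt R n) →+* A := IsLocalization.Away.lift (dt R n) hunit with he
    have he_alg : ∀ w, e (algebraMap (MvPolynomial (Fin n × Fin n) R) _ w) = ψ w :=
      fun w => IsLocalization.Away.lift_eq _ hunit w
    have heu : e (uu R n) = 1 := by
      have h1 := congrArg e (mul_uu R n)
      rw [map_mul, he_alg, hψd, one_mul, map_one] at h1
      exact h1
    have hEntries : ∀ i j, e (Nm R hn i j) = M.1 i j := by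
      intro i j
      rw [Nm]
      simp only [Matrix.of_apply]
      rw [map_mul, he_alg, apply_ite e, heu, map_one, ite_self, one_mul, hψ, aeval_X]
    have hcomp : e.comp ((algebraMap (MvPolynomial (Fin n × Fin n) R)
        (Localization.Away (dt R n))).comp (algebraMap R (MvPolynomial (Fin n × Fin n) R)))
        = algebraMap R A := by
      ext r
      simp only [RingHom.comp_apply]
      rw [he_alg]
      simp [algebraMap_eq]
    have hkey := key K Kbar hn p h
    have h2 := congrArg (map e) hkey
    rw [map_aeval_lin e (Nm R hn), map_map, hcomp] at h2
    simp only [hEntries] at h2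
    exact h2
end

section
/- Let O be a complete discrete valuation ring with uniformizer π in which 2, 3, 5 and 7 are invertible. Let P0 be the symmetric 3×3 Gram matrix over O of the quadratic form ρ0 = −(2^12·5·7/3^2)·(v_2^2 − v_1·v_3) in the variables v_1, v_2, v_3. Let P be a symmetric 3×3 matrix over O such that P ≡ P0 modulo π^s for some integer s ≥ 1. Then there exist a matrix T ∈ GL_3(O) and an element u ∈ O such that T ≡ Id_3 modulo π^s, u ≡ 1 modulo π^s, and Tᵀ·P·T = u·P0. -/
namespace Rho0Aux

open Matrix

variable {O : Type} [CommRing O]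

/-- Entrywise divisibility by `π ^ m`. -/
def Dv (π : O) (m : ℕ) (A : Matrix (Fin 3) (Fin 3) O) : Prop := ∀ i j, π ^ m ∣ A i j

variable {π : O}

lemma Dv.add {m} {A B : Matrix (Fin 3) (Fin 3) O} (hA : Dv π m A) (hB : Dv π m B) :
    Dv π m (A + B) := fun i j => by
  simpa [Matrix.add_apply] using dvd_add (hA i j) (hB i j)

lemma Dv.neg {m} {A : Matrix (Fin 3) (Fin 3) O} (hA : Dv π m A) : Dv π m (-A) := fun i j => by
  simpa [Matrix.neg_apply] using (hA i j).neg_right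

lemma Dv.smul {m} (c : O) {A : Matrix (Fin 3) (Fin 3) O} (hA : Dv π m A) : Dv π m (c • A) :=
  fun i j => by simpa [Matrix.smul_apply] using (hA i j).mul_left c

lemma Dv.mul_left {m} (N : Matrix (Fin 3) (Fin 3) O) {A : Matrix (Fin 3) (Fin 3) O}
    (hA : Dv π m A) : Dv π m (N * A) := fun i j => by
  rw [Matrix.mul_apply]; exact Finset.dvd_sum fun k _ => (hA k j).mul_left _

lemma Dv.mul_right {m} {A : Matrix (Fin 3) (Fin 3) O} (hA : Dv π m A)
    (N : Matrix (Fin 3) (Fin 3) O) : Dv π m (A * N) := fun i j => by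
  rw [Matrix.mul_apply]; exact Finset.dvd_sum fun k _ => (hA i k).mul_right _

lemma Dv.transpose {m} {A : Matrix (Fin 3) (Fin 3) O} (hA : Dv π m A) : Dv π m Aᵀ :=
  fun i j => hA j i

lemma Dv.mono {m m'} (h : m' ≤ m) {A : Matrix (Fin 3) (Fin 3) O} (hA : Dv π m A) : Dv π m' A :=
  fun i j => (pow_dvd_pow π h).trans (hA i j)

lemma Dv.mul {m m'} {A B : Matrix (Fin 3) (Fin 3) O} (hA : Dv π m A) (hB : Dv π m' B) :
    Dv π (m + m') (A * B) := fun i j => by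
  rw [Matrix.mul_apply, pow_add]
  exact Finset.dvd_sum fun k _ => mul_dvd_mul (hA i k) (hB k j)

/-- One Newton step improves the congruence. -/
lemma step {c : O} (hc : 2 * c = 1) {P P0 : Matrix (Fin 3) (Fin 3) O}
    (hPsym : P.IsSymm) (hP0sym : P0.IsSymm) (hdet : IsUnit P0.det)
    {m : ℕ} (hm : 1 ≤ m) {T : Matrix (Fin 3) (Fin 3) O}
    (hE : Dv π m (Tᵀ * P * T - P0)) :
    Dv π m (-(c • (P0⁻¹ * (Tᵀ * P * T - P0)))) ∧
    Dv π (m + 1)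
      ((T * (1 + -(c • (P0⁻¹ * (Tᵀ * P * T - P0)))))ᵀ * P *
        (T * (1 + -(c • (P0⁻¹ * (Tᵀ * P * T - P0))))) - P0) := by
  set F := Tᵀ * P * T - P0 with hF
  set A := -(c • (P0⁻¹ * F)) with hA
  have hDA : Dv π m A := ((Dv.mul_left _ hE).smul c).neg
  refine ⟨hDA, ?_⟩
  have hFsym : Fᵀ = F := by
    rw [hF, Matrix.transpose_sub, Matrix.transpose_mul, Matrix.transpose_mul,
      Matrix.transpose_transpose, hPsym.eq, hP0sym.eq, Matrix.mul_assoc]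
  have hinvsym : (P0⁻¹)ᵀ = P0⁻¹ := by
    rw [Matrix.transpose_nonsing_inv, hP0sym.eq]
  have hAt : Aᵀ = -(c • (F * P0⁻¹)) := by
    rw [hA, Matrix.transpose_neg, Matrix.transpose_smul, Matrix.transpose_mul, hFsym, hinvsym]
  have hAP0 : Aᵀ * P0 = -(c • F) := by
    rw [hAt, Matrix.neg_mul, Matrix.smul_mul, Matrix.mul_assoc,
      Matrix.nonsing_inv_mul P0 hdet, Matrix.mul_one]
  have hP0A : P0 * A = -(c • F) := by
    rw [hA, Matrix.mul_neg, Matrix.mul_smul, ← Matrix.mul_assoc,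
      Matrix.mul_nonsing_inv P0 hdet, Matrix.one_mul]
  set Q := Tᵀ * P * T with hQ
  have hQF : Q = P0 + F := by rw [hF]; abel
  have hcancel : F + Aᵀ * P0 + P0 * A = 0 := by
    rw [hAP0, hP0A]
    have hcc : c + c = 1 := by linear_combination hc
    have hmod : F + -(c • F) + -(c • F) = (1 - (c + c)) • F := by module
    rw [hmod, hcc, sub_self, zero_smul]
  have hexpand : (T * (1 + A))ᵀ * P * (T * (1 + A)) - P0
      = (F + Aᵀ * P0 + P0 * A) + (Aᵀ * F + F * A + Aᵀ * Q * A) := by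
    rw [Matrix.transpose_mul, Matrix.transpose_add, Matrix.transpose_one]
    have : (1 + Aᵀ) * Tᵀ * P * (T * (1 + A))
        = Q + Aᵀ * Q + Q * A + Aᵀ * Q * A := by
      rw [hQ]; noncomm_ring
    rw [this, hQF]; noncomm_ring
  rw [hexpand, hcancel, zero_add]
  have h1 : Dv π (m + m) (Aᵀ * F) := hDA.transpose.mul hE
  have h2 : Dv π (m + m) (F * A) := hE.mul hDA
  have h3 : Dv π (m + m) (Aᵀ * Q * A) := ((hDA.transpose.mul_right Q).mul hDA)
  have hmm : m + 1 ≤ m + m := by omega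
  exact ((h1.add h2).add h3).mono hmm

end Rho0Aux

open Rho0Aux Matrix in
/-- Rigidification of quadratic forms congruent to `ρ₀` over a complete DVR with residue
characteristic not `2, 3, 5, 7`: if a symmetric matrix `P` is congruent to the Gram matrix
`P₀` of `ρ₀ = -(2^12·5·7/3^2)·(v₂² - v₁v₃)` modulo `π^s`, then there are `T ∈ GL₃(O)` and
`u ∈ O`, both congruent to the identity (resp. `1`) modulo `π^s`, with `Tᵀ·P·T = u·P₀`. -/
theorem exists_congruence_to_rho0
    {O : Type} [CommRing O] [IsDomain O] [IsDiscreteValuationRing O]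
    (π : O) (hπ : Irreducible π) [IsAdicComplete (Ideal.span {π}) O]
    (h2 : IsUnit (2 : O)) (h3 : IsUnit (3 : O)) (h5 : IsUnit (5 : O)) (h7 : IsUnit (7 : O))
    (P0 : Matrix (Fin 3) (Fin 3) O)
    (hP0sym : P0.IsSymm)
    (hP0 : (2 * 3 ^ 2 : O) • P0
      = (-(2 ^ 12 * 5 * 7) : O) • (!![0, 0, -1; 0, 2, 0; -1, 0, 0] : Matrix (Fin 3) (Fin 3) O))
    (P : Matrix (Fin 3) (Fin 3) O) (hPsym : P.IsSymm)
    (s : ℕ) (hs : 1 ≤ s)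
    (hcong : ∀ i j, π ^ s ∣ (P i j - P0 i j)) :
    ∃ (T : Matrix (Fin 3) (Fin 3) O) (u : O),
      IsUnit T.det ∧
      (∀ i j, π ^ s ∣ (T i j - (1 : Matrix (Fin 3) (Fin 3) O) i j)) ∧
      π ^ s ∣ (u - 1) ∧
      T.transpose * P * T = u • P0 := by
  classical
  set I := Ideal.span {π} with hI
  -- the inverse of 2
  obtain ⟨c, hc⟩ : ∃ c : O, 2 * c = 1 := h2.exists_right_inv
  -- det P0 is a unit
  have hdet : IsUnit P0.det := by
    have h1 := congrArg Matrix.det hP0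
    rw [Matrix.det_smul, Matrix.det_smul] at h1
    have hM : (!![0, 0, -1; 0, 2, 0; -1, 0, 0] : Matrix (Fin 3) (Fin 3) O).det = -2 := by
      simp [Matrix.det_fin_three]
    rw [hM] at h1
    simp only [Fintype.card_fin] at h1
    have hRHS : IsUnit ((-(2 ^ 12 * 5 * 7) : O) ^ 3 * (-2)) := by
      exact (((((h2.pow 12).mul h5).mul h7).neg.pow 3).mul h2.neg)
    rw [← h1] at hRHS
    exact isUnit_of_mul_isUnit_right hRHS
  -- the Newton iteration
  set g : ℕ → Matrix (Fin 3) (Fin 3) O := fun n =>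
    Nat.rec (motive := fun _ => Matrix (Fin 3) (Fin 3) O) (1 : Matrix (Fin 3) (Fin 3) O)
      (fun _ Tk => Tk * (1 + -(c • (P0⁻¹ * (Tkᵀ * P * Tk - P0))))) n with hg
  have hgsucc : ∀ k, g (k + 1) = g k * (1 + -(c • (P0⁻¹ * ((g k)ᵀ * P * (g k) - P0)))) :=
    fun k => rfl
  have hinv : ∀ k, Dv π (s + k) ((g k)ᵀ * P * (g k) - P0) := by
    intro k
    induction k with
    | zero =>
        have hg0 : g 0 = 1 := rfl
        rw [hg0]
        intro i j
        simpa [Matrix.sub_apply] using hcong i j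
    | succ k ih =>
        have hm : 1 ≤ s + k := le_trans hs (Nat.le_add_right s k)
        have := (step hc hPsym hP0sym hdet hm ih).2
        rw [hgsucc k]
        exact this
  have hstepDv : ∀ k, Dv π (s + k) (g (k + 1) - g k) := by
    intro k
    have hm : 1 ≤ s + k := le_trans hs (Nat.le_add_right s k)
    have hDA := (step hc hPsym hP0sym hdet hm (hinv k)).1
    have heq : g (k + 1) - g k = g k * -(c • (P0⁻¹ * ((g k)ᵀ * P * (g k) - P0))) := by
      rw [hgsucc k]; noncomm_ring
    rw [heq]
    exact Dv.mul_left _ hDA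
  have hdiff : ∀ k l, k ≤ l → Dv π (s + k) (g l - g k) := by
    intro k l hkl
    induction l, hkl using Nat.le_induction with
    | base => intro i j; simp
    | succ l hkl ih =>
        have heq : g (l + 1) - g k = (g (l + 1) - g l) + (g l - g k) := by abel
        rw [heq]
        exact ((hstepDv l).mono (by omega)).add ih
  -- taking the limit entrywise
  have hpre : IsPrecomplete I O := inferInstance
  have hmem : ∀ (n : ℕ) (x : O), x ∈ (I ^ n • ⊤ : Submodule O O) ↔ π ^ n ∣ x := by
    intro n x
    rw [smul_eq_mul, Ideal.mul_top, hI, Ideal.span_singleton_pow, Ideal.mem_span_singleton]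
  have hlim : ∀ i j, ∃ L : O, ∀ n, π ^ n ∣ g n i j - L := by
    intro i j
    obtain ⟨L, hL⟩ := hpre.prec (f := fun n => g n i j) (by
      intro m n hmn
      rw [SModEq.sub_mem, hmem]
      have := ((hdiff m n hmn).mono (Nat.le_add_left m s)) i j
      rw [Matrix.sub_apply] at this
      exact (dvd_sub_comm.mp this))
    exact ⟨L, fun n => by
      have := hL n
      rw [SModEq.sub_mem, hmem] at this
      exact this⟩
  choose Tf hTf using hlim
  set T : Matrix (Fin 3) (Fin 3) O := Matrix.of Tf with hT
  have hTg : ∀ n, Dv π n (T - g n) := by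
    intro n i j
    rw [Matrix.sub_apply]
    exact dvd_sub_comm.mp (hTf i j n)
  -- the limit satisfies the equation exactly
  have hXdv : ∀ n, Dv π n (Tᵀ * P * T - P0) := by
    intro n
    have hXeq : Tᵀ * P * T - P0
        = Tᵀ * P * (T - g n) + (T - g n)ᵀ * P * (g n) + ((g n)ᵀ * P * (g n) - P0) := by
      rw [Matrix.transpose_sub]; noncomm_ring
    rw [hXeq]
    exact ((Dv.mul_left _ (hTg n)).add
      ((((hTg n).transpose.mul_right P).mul_right (g n)))).add ((hinv n).mono (Nat.le_add_left n s))
  have hhaus : IsHausdorff I O := inferInstance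
  have hX0 : Tᵀ * P * T - P0 = 0 := by
    ext i j
    rw [Matrix.zero_apply]
    apply hhaus.haus ((Tᵀ * P * T - P0) i j)
    intro n
    rw [SModEq.sub_mem, sub_zero, hmem]
    exact hXdv n i j
  -- congruence of T to the identity
  have hTid : ∀ i j, π ^ s ∣ (T i j - (1 : Matrix (Fin 3) (Fin 3) O) i j) := by
    intro i j
    have h1 : Dv π s (T - g s) := (hTg s)
    have h2 : Dv π s (g s - 1) := by
      have := hdiff 0 s (Nat.zero_le s)
      have hg0 : g 0 = 1 := rfl
      rw [hg0] at this
      exact this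
    have := (h1.add h2) i j
    rw [Matrix.add_apply, Matrix.sub_apply, Matrix.sub_apply] at this
    have heq : T i j - g s i j + (g s i j - (1 : Matrix (Fin 3) (Fin 3) O) i j)
        = T i j - (1 : Matrix (Fin 3) (Fin 3) O) i j := by ring
    rwa [heq] at this
  -- det T is a unit
  have hdetT : IsUnit T.det := by
    set φ := Ideal.Quotient.mk I with hφ
    have hmap : φ.mapMatrix T = φ.mapMatrix (1 : Matrix (Fin 3) (Fin 3) O) := by
      ext i j
      rw [RingHom.mapMatrix_apply, RingHom.mapMatrix_apply, Matrix.map_apply, Matrix.map_apply]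
      rw [Ideal.Quotient.eq, hI, Ideal.mem_span_singleton]
      exact (dvd_pow_self π (Nat.one_le_iff_ne_zero.mp hs)).trans (hTid i j)
    have hdq : φ T.det = φ 1 := by
      rw [RingHom.map_det, hmap, ← RingHom.map_det, Matrix.det_one]
    rw [Ideal.Quotient.eq, hI, Ideal.mem_span_singleton] at hdq
    obtain ⟨x, hx⟩ := hdq
    by_contra hu
    have hmemT : T.det ∈ IsLocalRing.maximalIdeal O := (IsLocalRing.mem_maximalIdeal _).2 hu
    have hmemπx : π * x ∈ IsLocalRing.maximalIdeal O := by
      rw [IsLocalRing.mem_maximalIdeal, mem_nonunits_iff]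
      intro h
      exact hπ.not_isUnit (isUnit_of_mul_isUnit_left h)
    have h1mem : (1 : O) ∈ IsLocalRing.maximalIdeal O := by
      have := Submodule.sub_mem _ hmemT hmemπx
      have heq : T.det - π * x = 1 := by linear_combination hx
      rwa [heq] at this
    have hne := (IsLocalRing.mem_maximalIdeal _).1 h1mem
    rw [mem_nonunits_iff] at hne
    exact hne isUnit_one
  refine ⟨T, 1, hdetT, hTid, by simp, ?_⟩
  rw [one_smul]
  exact sub_eq_zero.mp hX0
end

section
/- Let k be a field of characteristic different from 2. Let q ∈ k[x_1,x_2,x_3] be a homogeneous polynomial of degree 2 such that the quotient ring A := k[x_1,x_2,x_3]/(q) is an integrally closed integral domain (this holds when q is a nondegenerate quadratic form), and let g ∈ k[x_1,x_2,x_3] be a homogeneous polynomial of degree 4. Then the ring k[x_1,x_2,x_3,y]/(q, y^2 + g) is reduced if and only if g does not belong to the ideal generated by q in k[x_1,x_2,x_3]. -/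
open Polynomial in
/-- Auxiliary: over a domain `A` with `2 ≠ 0`, the ring `A[X]/(X² + c)` is reduced iff `c ≠ 0`. -/
lemma aux_isReduced_quot_X_sq_add_C {A : Type*} [CommRing A] [IsDomain A]
    (h2 : (2 : A) ≠ 0) (c : A) :
    IsReduced (A[X] ⧸ Ideal.span {X ^ 2 + C c}) ↔ c ≠ 0 := by
  rw [← RingHom.ker_isRadical_iff_reduced_of_surjective
      (Ideal.Quotient.mk_surjective (R := A[X]) (I := Ideal.span {X ^ 2 + C c})), Ideal.mk_ker,
      ← isRadical_iff_span_singleton]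
  constructor
  · rintro hrad rfl
    have h1 : (X ^ 2 + C (0 : A)) ∣ (X : A[X]) := hrad 2 X (by simp)
    rw [map_zero, add_zero] at h1
    have := Polynomial.natDegree_le_of_dvd h1 X_ne_zero
    simp at this
  · intro hc n y hdvd
    rcases Nat.eq_zero_or_pos n with rfl | hn
    · rw [pow_zero] at hdvd
      have := Polynomial.natDegree_le_of_dvd hdvd one_ne_zero
      simp [natDegree_X_pow_add_C] at this
    · set K := FractionRing A
      have inj : Function.Injective (algebraMap A K) := IsFractionRing.injective A K
      have hmonic : (X ^ 2 + C c).Monic := monic_X_pow_add_C c two_ne_zero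
      rw [← Polynomial.map_dvd_map (algebraMap A K) inj hmonic]
      set c' : K := algebraMap A K c with hc'def
      have hc' : c' ≠ 0 := by
        intro h
        have h' : algebraMap A K c = algebraMap A K 0 := by simpa [hc'def] using h
        exact hc (inj h')
      have h2' : (2 : K) ≠ 0 := by
        intro h
        have h' : algebraMap A K 2 = algebraMap A K 0 := by
          rw [map_zero, map_ofNat]; exact h
        exact h2 (inj h')
      have hmap : (X ^ 2 + C c).map (algebraMap A K) = X ^ 2 + C c' := by
        simp [hc'def]
      have hsq : Squarefree ((X ^ 2 + C c).map (algebraMap A K)) := by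
        rw [hmap]
        apply Polynomial.Separable.squarefree
        rw [Polynomial.Separable]
        have hd : derivative (X ^ 2 + C c' : K[X]) = C 2 * X := by
          rw [derivative_add, derivative_C, add_zero, derivative_X_pow]
          norm_num
        rw [hd]
        refine ⟨C c'⁻¹, -(C (2⁻¹ * c'⁻¹) * X), ?_⟩
        have e1 : (C c'⁻¹ : K[X]) * C c' = 1 := by
          rw [← C_mul, inv_mul_cancel₀ hc', C_1]
        have e2 : (C (2⁻¹ * c'⁻¹) : K[X]) * C 2 = C c'⁻¹ := by
          rw [← C_mul]
          congr 1
          rw [mul_right_comm, inv_mul_cancel₀ h2', one_mul]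
        linear_combination e1 - (X : K[X]) ^ 2 * e2
      have hmdvd : (X ^ 2 + C c).map (algebraMap A K) ∣ (y.map (algebraMap A K)) ^ n := by
        rw [← Polynomial.map_pow]
        exact Polynomial.map_dvd _ hdvd
      exact (hsq.dvd_pow_iff_dvd hn.ne').mp hmdvd

/-- Reducedness criterion in residue characteristic ≠ 2: with `q` a degree-2 form such that
`k[x₁,x₂,x₃]/(q)` is an integrally closed domain and `g` a degree-4 form, the ring
`k[x₁,x₂,x₃,y]/(q, y² + g)` is reduced iff `g` is not a multiple of `q`. -/
theorem isReduced_iff_not_mem_span_of_char_ne_two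
    {k : Type} [Field k] (h2 : (2 : k) ≠ 0)
    (q : MvPolynomial (Fin 3) k) (hq : q.IsHomogeneous 2)
    [IsDomain (MvPolynomial (Fin 3) k ⧸ Ideal.span {q})]
    [IsIntegrallyClosed (MvPolynomial (Fin 3) k ⧸ Ideal.span {q})]
    (g : MvPolynomial (Fin 3) k) (hg : g.IsHomogeneous 4) :
    IsReduced (Polynomial (MvPolynomial (Fin 3) k) ⧸
        Ideal.span {(Polynomial.C q : Polynomial (MvPolynomial (Fin 3) k)),
          Polynomial.X ^ 2 + Polynomial.C g})
      ↔ g ∉ Ideal.span {q} := by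
  classical
  open Polynomial in
  let R := MvPolynomial (Fin 3) k
  let I : Ideal R := Ideal.span {q}
  let A : Type := R ⧸ I
  letI : CommRing A := Ideal.Quotient.commRing I
  let mkq : R →+* A := Ideal.Quotient.mk I
  let f : A[X] := X ^ 2 + C (mkq g)
  have hf : f = X ^ 2 + C (mkq g) := rfl
  -- 2 ≠ 0 in A
  have h2A : (2 : A) ≠ 0 := by
    intro h
    have h4 : (2 : R) ∈ I := by
      rw [← Ideal.Quotient.eq_zero_iff_mem, map_ofNat]
      exact h
    obtain ⟨r, hr⟩ := Ideal.mem_span_singleton.mp h4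
    have hc0 : MvPolynomial.constantCoeff q = 0 := by
      rw [MvPolynomial.constantCoeff_eq]
      exact hq.coeff_eq_zero (d := 0) (by simp)
    have := congrArg MvPolynomial.constantCoeff hr
    rw [map_mul, hc0, zero_mul, map_ofNat] at this
    exact h2 (by exact_mod_cast this)
  -- the surjection R[X] → A[X]/(f)
  let φ : R[X] →+* A[X] ⧸ Ideal.span {f} :=
    (Ideal.Quotient.mk (Ideal.span {f})).comp (mapRingHom mkq)
  have hmapsurj : Function.Surjective (Polynomial.map mkq) :=
    Polynomial.map_surjective mkq Ideal.Quotient.mk_surjective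
  have hφsurj : Function.Surjective φ :=
    Ideal.Quotient.mk_surjective.comp hmapsurj
  have hmkq_q : mkq q = 0 :=
    Ideal.Quotient.eq_zero_iff_mem.mpr (Ideal.subset_span rfl)
  have hker : RingHom.ker φ = Ideal.span {(C q : R[X]), X ^ 2 + C g} := by
    apply le_antisymm
    · intro p hp
      have hp' : p.map mkq ∈ Ideal.span {f} := by
        rwa [RingHom.mem_ker, RingHom.comp_apply, coe_mapRingHom,
          Ideal.Quotient.eq_zero_iff_mem] at hp
      obtain ⟨h, hh⟩ := Ideal.mem_span_singleton.mp hp'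
      obtain ⟨h', rfl⟩ := hmapsurj h
      have key : p - (X ^ 2 + C g) * h' ∈ RingHom.ker (mapRingHom mkq) := by
        rw [RingHom.mem_ker, coe_mapRingHom, Polynomial.map_sub, Polynomial.map_mul, hh]
        simp [hf]
      rw [Polynomial.ker_mapRingHom, Ideal.mk_ker, Ideal.map_span,
        Set.image_singleton] at key
      have h1 : p - (X ^ 2 + C g) * h' ∈ Ideal.span {(C q : R[X]), X ^ 2 + C g} :=
        Ideal.span_mono (by simp) key
      have h2' : (X ^ 2 + C g) * h' ∈ Ideal.span {(C q : R[X]), X ^ 2 + C g} :=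
        Ideal.mul_mem_right _ _ (Ideal.subset_span (by simp))
      simpa using add_mem h1 h2'
    · rw [Ideal.span_le]
      rintro x hx
      simp only [Set.mem_insert_iff, Set.mem_singleton_iff] at hx
      rcases hx with rfl | rfl
      · rw [SetLike.mem_coe, RingHom.mem_ker, RingHom.comp_apply, coe_mapRingHom, map_C,
          hmkq_q, map_zero, map_zero]
      · rw [SetLike.mem_coe, RingHom.mem_ker, RingHom.comp_apply, coe_mapRingHom,
          Ideal.Quotient.eq_zero_iff_mem]
        apply Ideal.subset_span
        simp [hf]
  have step1 : IsReduced (R[X] ⧸ Ideal.span {(C q : R[X]), X ^ 2 + C g}) ↔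
      (Ideal.span {(C q : R[X]), X ^ 2 + C g}).IsRadical := by
    rw [← RingHom.ker_isRadical_iff_reduced_of_surjective
      (Ideal.Quotient.mk_surjective (I := Ideal.span {(C q : R[X]), X ^ 2 + C g})),
      Ideal.mk_ker]
  have step2 : (Ideal.span {(C q : R[X]), X ^ 2 + C g}).IsRadical ↔
      IsReduced (A[X] ⧸ Ideal.span {f}) := by
    rw [← hker]
    exact RingHom.ker_isRadical_iff_reduced_of_surjective hφsurj
  have step3 : IsReduced (A[X] ⧸ Ideal.span {f}) ↔ mkq g ≠ 0 :=
    aux_isReduced_quot_X_sq_add_C h2A (mkq g)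
  have step4 : mkq g ≠ 0 ↔ g ∉ I := not_congr Ideal.Quotient.eq_zero_iff_mem
  exact step1.trans (step2.trans (step3.trans step4))
end

section
/- Let O be a discrete valuation ring with uniformizer π and residue field k. Let s ≥ 0 be an integer and ε ∈ {0,1} with 2s + ε > 0. Let Q ∈ O[x_1,x_2,x_3] be a quadratic form whose reduction modulo π is nonzero, and let T = T_0 + T_1·y where T_0, T_1 ∈ O[x_1,x_2,x_3]. Then the ring B := O[x_1,x_2,x_3,y]/(Q − π^s·y, y^2 + π^ε·T) is a flat O-module; equivalently, B has no nonzero π-torsion. -/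
open Polynomial

theorem MyAux.dvd_of_map_eq_zero {O : Type} [CommRing O] (π : O)
    (p : Polynomial (MvPolynomial (Fin 3) O))
    (hp : p.map (MvPolynomial.map (Ideal.Quotient.mk (Ideal.span {π}))) = 0) :
    Polynomial.C (MvPolynomial.C π) ∣ p := by
  rw [Polynomial.C_dvd_iff_dvd_coeff]
  intro n
  rw [MvPolynomial.C_dvd_iff_dvd_coeff]
  intro m
  rw [← Ideal.mem_span_singleton, ← Ideal.Quotient.eq_zero_iff_mem]
  have h1 : (p.map (MvPolynomial.map (Ideal.Quotient.mk (Ideal.span {π})))).coeff n = 0 := by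
    rw [hp]; simp
  rw [Polynomial.coeff_map] at h1
  have h2 := congrArg (MvPolynomial.coeff m) h1
  rwa [MvPolynomial.coeff_map, MvPolynomial.coeff_zero] at h2

set_option maxHeartbeats 1000000 in
set_option synthInstance.maxHeartbeats 200000 in
theorem MyAux.key
    {O : Type} [CommRing O] [IsDomain O] [IsDiscreteValuationRing O]
    (π : O) (hπ : Irreducible π)
    (s ε : ℕ) (hε : ε = 0 ∨ ε = 1) (hsε : 0 < 2 * s + ε)
    (Q : MvPolynomial (Fin 3) O)
    (hQred : MvPolynomial.map (Ideal.Quotient.mk (Ideal.span {π})) Q ≠ 0)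
    (T0 T1 : MvPolynomial (Fin 3) O)
    (p : Polynomial (MvPolynomial (Fin 3) O))
    (hp : Polynomial.C (MvPolynomial.C π) * p ∈
      Ideal.span {Polynomial.C Q - Polynomial.C (MvPolynomial.C (π ^ s)) * Polynomial.X,
        Polynomial.X ^ 2 + Polynomial.C (MvPolynomial.C (π ^ ε)) *
          (Polynomial.C T0 + Polynomial.C T1 * Polynomial.X)}) :
    p ∈ Ideal.span {Polynomial.C Q - Polynomial.C (MvPolynomial.C (π ^ s)) * Polynomial.X,
        Polynomial.X ^ 2 + Polynomial.C (MvPolynomial.C (π ^ ε)) *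
          (Polynomial.C T0 + Polynomial.C T1 * Polynomial.X)} := by
  classical
  have hπ0 : π ≠ 0 := hπ.ne_zero
  haveI hprime : (Ideal.span {π} : Ideal O).IsPrime := by
    rw [← IsDiscreteValuationRing.irreducible_iff_uniformizer π |>.mp hπ]
    exact (IsLocalRing.maximalIdeal.isMaximal O).isPrime
  set mk : O →+* O ⧸ Ideal.span {π} := Ideal.Quotient.mk (Ideal.span {π}) with hmkdef
  set φR : MvPolynomial (Fin 3) O →+* MvPolynomial (Fin 3) (O ⧸ Ideal.span {π}) :=
    MvPolynomial.map mk with hφRdef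
  have hmkπ : mk π = 0 := Ideal.Quotient.eq_zero_iff_mem.mpr (Ideal.mem_span_singleton_self π)
  set q1 : Polynomial (MvPolynomial (Fin 3) O) :=
    Polynomial.C Q - Polynomial.C (MvPolynomial.C (π ^ s)) * Polynomial.X with hq1def
  set q2 : Polynomial (MvPolynomial (Fin 3) O) :=
    Polynomial.X ^ 2 + Polynomial.C (MvPolynomial.C (π ^ ε)) *
      (Polynomial.C T0 + Polynomial.C T1 * Polynomial.X) with hq2def
  -- q2 is monic of degree 2
  have hlow : (Polynomial.C (MvPolynomial.C (π ^ ε)) *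
      (Polynomial.C T0 + Polynomial.C T1 * Polynomial.X)).degree < 2 := by
    apply lt_of_le_of_lt (Polynomial.degree_mul_le _ _)
    have h1 : (Polynomial.C (MvPolynomial.C (π ^ ε)) :
        Polynomial (MvPolynomial (Fin 3) O)).degree ≤ 0 := Polynomial.degree_C_le
    have h2 : (Polynomial.C T0 + Polynomial.C T1 * Polynomial.X :
        Polynomial (MvPolynomial (Fin 3) O)).degree ≤ 1 := by
      apply le_trans (Polynomial.degree_add_le _ _)
      apply max_le (le_trans Polynomial.degree_C_le (by norm_num))
      apply le_trans (Polynomial.degree_mul_le _ _)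
      calc (Polynomial.C T1 : Polynomial (MvPolynomial (Fin 3) O)).degree + Polynomial.X.degree
          ≤ 0 + 1 := add_le_add Polynomial.degree_C_le Polynomial.degree_X_le
        _ = 1 := by norm_num
    calc (Polynomial.C (MvPolynomial.C (π ^ ε)) :
        Polynomial (MvPolynomial (Fin 3) O)).degree +
          (Polynomial.C T0 + Polynomial.C T1 * Polynomial.X).degree
        ≤ 0 + 1 := add_le_add h1 h2
      _ < 2 := by norm_num
  have hmonic : q2.Monic := by
    rw [hq2def]
    exact Polynomial.monic_X_pow_add hlow
  have hdeg2 : q2.degree = 2 := by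
    rw [hq2def]
    rw [Polynomial.degree_add_eq_left_of_degree_lt (by rwa [Polynomial.degree_X_pow])]
    exact Polynomial.degree_X_pow 2
  obtain ⟨a, b, hab⟩ := Ideal.mem_span_pair.mp hp
  set r := a %ₘ q2 with hrdef
  have hdr : r.degree < 2 := by
    have := Polynomial.degree_modByMonic_lt a hmonic
    rwa [hdeg2] at this
  set b' := b + (a /ₘ q2) * q1 with hb'def
  have heq : r * q1 + b' * q2 = Polynomial.C (MvPolynomial.C π) * p := by
    rw [← hab]
    have hmd : r + q2 * (a /ₘ q2) = a := Polynomial.modByMonic_add_div a q2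
    calc r * q1 + b' * q2 = (r + q2 * (a /ₘ q2)) * q1 + b * q2 := by rw [hb'def]; ring
      _ = a * q1 + b * q2 := by rw [hmd]
  -- reduce mod π
  set Qb : MvPolynomial (Fin 3) (O ⧸ Ideal.span {π}) := φR Q with hQbdef
  have hQb0 : Qb ≠ 0 := hQred
  set rm := r.map φR with hrmdef
  set bm := b'.map φR with hbmdef
  have hφC : ∀ g : MvPolynomial (Fin 3) O,
      (Polynomial.C g).map φR = Polynomial.C (φR g) := fun g => Polynomial.map_C φR
  have hred : rm * (q1.map φR) + bm * (q2.map φR) = 0 := by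
    have h0 := congrArg (Polynomial.map φR) heq
    simp only [Polynomial.map_add, Polynomial.map_mul, Polynomial.map_C] at h0
    have hz : φR (MvPolynomial.C π) = 0 := by
      rw [hφRdef, MvPolynomial.map_C, hmkπ, map_zero]
    rw [hz, Polynomial.C_0, zero_mul] at h0
    exact h0
  have hdrm : rm.degree < 2 := lt_of_le_of_lt (Polynomial.degree_map_le) hdr
  -- compute reductions of q1, q2 and conclude rm = 0, bm = 0
  have hrb : rm = 0 ∧ bm = 0 := by
    rcases Nat.eq_zero_or_pos s with hs | hs
    · -- s = 0, hence ε = 1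
      have hε1 : ε = 1 := by omega
      have hq1m : q1.map φR = Polynomial.C Qb - Polynomial.X := by
        have h1 : φR (MvPolynomial.C (π ^ 0)) = 1 := by
          rw [pow_zero, MvPolynomial.C_1, map_one]
        rw [hq1def, hs, Polynomial.map_sub, Polynomial.map_mul, Polynomial.map_C,
          Polynomial.map_C, Polynomial.map_X, h1, Polynomial.C_1, one_mul, hQbdef]
      have hq2m : q2.map φR = Polynomial.X ^ 2 := by
        rw [hq2def, Polynomial.map_add, Polynomial.map_mul, Polynomial.map_C,
          Polynomial.map_pow, Polynomial.map_X, hε1, pow_one]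
        have : φR (MvPolynomial.C π) = 0 := by
          rw [hφRdef, MvPolynomial.map_C, hmkπ, map_zero]
        rw [this, Polynomial.C_0, zero_mul, add_zero]
      rw [hq1m, hq2m] at hred
      -- evaluate at Qb
      have hev := congrArg (Polynomial.eval Qb) hred
      simp only [Polynomial.eval_add, Polynomial.eval_mul, Polynomial.eval_sub,
        Polynomial.eval_C, Polynomial.eval_X, Polynomial.eval_pow, Polynomial.eval_zero,
        sub_self, mul_zero, zero_add] at hev
      have hroot : bm.eval Qb = 0 := by
        rcases mul_eq_zero.mp hev with h | h
        · exact h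
        · exact absurd (pow_eq_zero_iff (by norm_num) |>.mp h) hQb0
      obtain ⟨g, hg⟩ := Polynomial.dvd_iff_isRoot.mpr hroot
      have h2 : (Polynomial.X - Polynomial.C Qb) * (g * Polynomial.X ^ 2 - rm) = 0 := by
        rw [hg] at hred
        rw [← hred]; ring
      have hXC : (Polynomial.X - Polynomial.C Qb :
          Polynomial (MvPolynomial (Fin 3) (O ⧸ Ideal.span {π}))) ≠ 0 :=
        (Polynomial.monic_X_sub_C Qb).ne_zero
      have h3 : g * Polynomial.X ^ 2 - rm = 0 := by
        rcases mul_eq_zero.mp h2 with h | h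
        · exact absurd h hXC
        · exact h
      have hg0 : g = 0 := by
        by_contra hgne
        have hdeg : (g * Polynomial.X ^ 2).degree = g.degree + 2 := by
          rw [(Polynomial.monic_X_pow 2).degree_mul, Polynomial.degree_X_pow]
          norm_cast
        have hrmg : g * Polynomial.X ^ 2 = rm := by
          rw [← sub_eq_zero]; exact h3
        have h2le : (2 : WithBot ℕ) ≤ rm.degree := by
          rw [← hrmg, hdeg]
          calc (2 : WithBot ℕ) = 0 + 2 := by norm_num
            _ ≤ g.degree + 2 := by
              apply add_le_add_left
              exact Polynomial.zero_le_degree_iff.mpr hgne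
        exact absurd hdrm (not_lt.mpr h2le)
      have hrm0 : rm = 0 := by
        have := h3
        rw [hg0, zero_mul, zero_sub, neg_eq_zero] at this
        exact this
      refine ⟨hrm0, ?_⟩
      rw [hg, hg0, mul_zero]
    · -- s ≥ 1
      have hq1m : q1.map φR = Polynomial.C Qb := by
        rw [hq1def, Polynomial.map_sub, Polynomial.map_mul, Polynomial.map_C, Polynomial.map_C,
          Polynomial.map_X]
        have : φR (MvPolynomial.C (π ^ s)) = 0 := by
          rw [hφRdef, MvPolynomial.map_C, map_pow, hmkπ, zero_pow hs.ne',
            map_zero]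
        rw [this, Polynomial.C_0, zero_mul, sub_zero]
      have hq2mon : (q2.map φR).Monic := hmonic.map φR
      have hq2deg : (q2.map φR).degree = 2 := by
        rw [hmonic.degree_map φR, hdeg2]
      rw [hq1m] at hred
      have hbm0 : bm = 0 := by
        by_contra hne
        have heq2 : bm * (q2.map φR) = -(rm * Polynomial.C Qb) :=
          eq_neg_of_add_eq_zero_right (a := rm * Polynomial.C Qb) (b := bm * (q2.map φR)) hred
        have hlt : (rm * Polynomial.C Qb).degree < 2 := by
          apply lt_of_le_of_lt (Polynomial.degree_mul_le _ _)
          calc rm.degree + (Polynomial.C Qb).degree ≤ rm.degree + 0 :=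
              add_le_add_right Polynomial.degree_C_le _
            _ = rm.degree := by rw [add_zero]
            _ < 2 := hdrm
        have hge : (2 : WithBot ℕ) ≤ (bm * (q2.map φR)).degree := by
          rw [hq2mon.degree_mul, hq2deg]
          calc (2 : WithBot ℕ) = 0 + 2 := by norm_num
            _ ≤ bm.degree + 2 := add_le_add_left (Polynomial.zero_le_degree_iff.mpr hne) _
        rw [heq2, Polynomial.degree_neg] at hge
        exact absurd hlt (not_lt.mpr hge)
      refine ⟨?_, hbm0⟩
      rw [hbm0, zero_mul, add_zero] at hred
      rcases mul_eq_zero.mp hred with h | h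
      · exact h
      · exact absurd (Polynomial.C_eq_zero.mp h) hQb0
  -- lift divisibility and cancel π
  obtain ⟨hrm0, hbm0⟩ := hrb
  obtain ⟨r2, hr2⟩ := MyAux.dvd_of_map_eq_zero π r hrm0
  obtain ⟨b2, hb2⟩ := MyAux.dvd_of_map_eq_zero π b' hbm0
  have hC : (Polynomial.C (MvPolynomial.C π) : Polynomial (MvPolynomial (Fin 3) O)) ≠ 0 := by
    simp only [ne_eq, Polynomial.C_eq_zero, MvPolynomial.C_eq_zero]
    exact hπ0
  have hfin : Polynomial.C (MvPolynomial.C π) * (r2 * q1 + b2 * q2) =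
      Polynomial.C (MvPolynomial.C π) * p := by
    rw [← heq, hr2, hb2]; ring
  exact Ideal.mem_span_pair.mpr ⟨r2, b2, mul_left_cancel₀ hC hfin⟩

open TensorProduct in
theorem MyAux.flat_of_torsionFree {R M : Type*} [CommRing R] [IsDomain R]
    [IsPrincipalIdealRing R] [AddCommGroup M] [Module R M]
    (h : ∀ c : R, c ≠ 0 → ∀ m : M, c • m = 0 → m = 0) : Module.Flat R M := by
  rw [Module.Flat.iff_lift_lsmul_comp_subtype_injective]
  intro I _
  obtain ⟨a, rfl⟩ := (IsPrincipalIdealRing.principal I).principal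
  by_cases ha : a = 0
  · subst ha
    haveI : Subsingleton (↥(Submodule.span R ({(0 : R)} : Set R))) := by
      rw [Submodule.span_zero_singleton]
      exact ⟨fun x y => Subtype.ext (by
        rw [(Submodule.mem_bot R).mp x.2, (Submodule.mem_bot R).mp y.2])⟩
    exact Function.injective_of_subsingleton _
  · have haI : a ∈ Submodule.span R ({a} : Set R) :=
      Submodule.mem_span_singleton_self a
    have hsurj : ∀ z : (↥(Submodule.span R ({a} : Set R))) ⊗[R] M,
        ∃ m : M, z = (⟨a, haI⟩ : Submodule.span R ({a} : Set R)) ⊗ₜ[R] m := by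
      intro z
      induction z using TensorProduct.induction_on with
      | zero => exact ⟨0, by simp⟩
      | tmul i m =>
        obtain ⟨c, hc⟩ := Ideal.mem_span_singleton'.mp i.2
        refine ⟨c • m, ?_⟩
        have hi : i = c • (⟨a, haI⟩ : Submodule.span R ({a} : Set R)) :=
          Subtype.ext (by simpa using hc.symm)
        rw [hi, TensorProduct.smul_tmul]
      | add x y hx hy =>
        obtain ⟨m, rfl⟩ := hx; obtain ⟨m', rfl⟩ := hy
        exact ⟨m + m', by rw [TensorProduct.tmul_add]⟩
    intro x y hxy
    obtain ⟨m, rfl⟩ := hsurj x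
    obtain ⟨m', rfl⟩ := hsurj y
    simp only [TensorProduct.lift.tmul, LinearMap.coe_comp, Function.comp_apply,
      Submodule.coe_subtype, LinearMap.lsmul_apply] at hxy
    have hmm : a • (m - m') = 0 := by rw [smul_sub, hxy, sub_self]
    have := h a ha _ hmm
    rw [sub_eq_zero] at this
    rw [this]

/-- Flatness over a DVR of the ring
`O[x₁,x₂,x₃,y]/(Q - π^s·y, y² + π^ε·(T₀ + T₁·y))` where `Q` is a quadratic form whose reduction
mod `π` is nonzero, `s ≥ 0`, `ε ∈ {0,1}` and `2s + ε > 0`. -/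
theorem flat_of_toggle_model_ring
    {O : Type} [CommRing O] [IsDomain O] [IsDiscreteValuationRing O]
    (π : O) (hπ : Irreducible π)
    (s ε : ℕ) (hε : ε = 0 ∨ ε = 1) (hsε : 0 < 2 * s + ε)
    (Q : MvPolynomial (Fin 3) O) (hQhom : Q.IsHomogeneous 2)
    (hQred : MvPolynomial.map (Ideal.Quotient.mk (Ideal.span {π})) Q ≠ 0)
    (T0 T1 : MvPolynomial (Fin 3) O) :
    Module.Flat O (Polynomial (MvPolynomial (Fin 3) O) ⧸
      Ideal.span {Polynomial.C Q - Polynomial.C (MvPolynomial.C (π ^ s)) * Polynomial.X,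
        Polynomial.X ^ 2 + Polynomial.C (MvPolynomial.C (π ^ ε)) *
          (Polynomial.C T0 + Polynomial.C T1 * Polynomial.X)}) := by
  set I : Ideal (Polynomial (MvPolynomial (Fin 3) O)) :=
    Ideal.span {Polynomial.C Q - Polynomial.C (MvPolynomial.C (π ^ s)) * Polynomial.X,
      Polynomial.X ^ 2 + Polynomial.C (MvPolynomial.C (π ^ ε)) *
        (Polynomial.C T0 + Polynomial.C T1 * Polynomial.X)} with hIdef
  apply MyAux.flat_of_torsionFree
  intro c hc z hz
  -- π-regularity on the quotient
  have hπreg : ∀ w : Polynomial (MvPolynomial (Fin 3) O) ⧸ I, π • w = 0 → w = 0 := by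
    intro w hw
    obtain ⟨p, rfl⟩ := Ideal.Quotient.mk_surjective w
    have hqp : π • p = Polynomial.C (MvPolynomial.C π) * p := by
      have ham : algebraMap O (Polynomial (MvPolynomial (Fin 3) O)) π
          = Polynomial.C (MvPolynomial.C π) := by
        rw [Polynomial.algebraMap_apply, MvPolynomial.algebraMap_apply]
        simp
      calc π • p = algebraMap O (Polynomial (MvPolynomial (Fin 3) O)) π • p :=
            (algebraMap_smul _ π p).symm
        _ = Polynomial.C (MvPolynomial.C π) * p := by rw [ham, smul_eq_mul]
    have hsm : (π • (Ideal.Quotient.mk I p) : Polynomial (MvPolynomial (Fin 3) O) ⧸ I) =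
        Ideal.Quotient.mk I (Polynomial.C (MvPolynomial.C π) * p) := by
      rw [← hqp]
      exact (Submodule.Quotient.mk_smul I π p).symm
    rw [hsm, Ideal.Quotient.eq_zero_iff_mem] at hw
    rw [Ideal.Quotient.eq_zero_iff_mem]
    exact MyAux.key π hπ s ε hε hsε Q hQred T0 T1 p hw
  -- reduce general torsion to powers of π
  obtain ⟨n, u, rfl⟩ := IsDiscreteValuationRing.eq_unit_mul_pow_irreducible hc hπ
  have hπn : (π ^ n : O) • z = 0 := by
    have h1 := congrArg (fun w => ((u⁻¹ : Oˣ) : O) • w) hz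
    simpa [smul_smul, ← mul_assoc] using h1
  clear hz hc
  induction n with
  | zero => simpa using hπn
  | succ n ih =>
    apply ih
    apply hπreg
    rw [smul_smul, ← pow_succ']
    exact hπn
end

section
/- Let k be a field of characteristic different from 2, and let φ : k[x_1,x_2,x_3] → k[x,z] be the k-algebra homomorphism determined by x_1 ↦ x^2, x_2 ↦ 2xz, x_3 ↦ z^2. Then the kernel of φ is the principal ideal generated by Q_0 := x_2^2 − 4·x_1·x_3. (This is the assertion used in the paper that the kernel of the map b consists exactly of the multiples Q_0·Q of the conic Q_0.) -/
open MvPolynomial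

lemma expand_monomial' {σ : Type*} {R : Type*} [CommRing R] (n : ℕ) (t : σ →₀ ℕ) (c : R) :
    expand n (monomial t c) = monomial (n • t) c := by
  rw [expand_monomial, monomial_eq]

lemma expand_injective' {σ : Type*} {R : Type*} [CommRing R] {n : ℕ} (hn : n ≠ 0)
    {φ : MvPolynomial σ R} (h : expand n φ = 0) : φ = 0 := by
  classical
  have hsmul : ∀ t s : σ →₀ ℕ, n • t = n • s ↔ t = s := by
    intro t s
    constructor
    · intro hts
      ext i
      have := congrFun (congrArg (DFunLike.coe) hts) i
      simp only [Finsupp.smul_apply, smul_eq_mul] at this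
      exact Nat.eq_of_mul_eq_mul_left (Nat.pos_of_ne_zero hn) this
    · intro hts; rw [hts]
  have hexp : expand n φ = ∑ t ∈ φ.support, monomial (n • t) (coeff t φ) := by
    conv_lhs => rw [φ.as_sum]
    rw [map_sum]
    exact Finset.sum_congr rfl fun t _ => expand_monomial' n t (coeff t φ)
  have key : ∀ s : σ →₀ ℕ, coeff (n • s) (expand n φ) = coeff s φ := by
    intro s
    rw [hexp, coeff_sum]
    have hterm : ∀ t ∈ φ.support,
        coeff (n • s) (monomial (n • t) (coeff t φ)) = if t = s then coeff t φ else 0 := by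
      intro t _
      rw [coeff_monomial]
      exact if_congr (hsmul t s) rfl rfl
    rw [Finset.sum_congr rfl hterm, Finset.sum_ite_eq' φ.support s (fun t => coeff t φ)]
    split_ifs with hs
    · rfl
    · exact (notMem_support_iff.mp hs).symm
  ext s
  rw [← key s, h, coeff_zero, coeff_zero]

/-- In characteristic ≠ 2, the kernel of the substitution `x₁ ↦ x², x₂ ↦ 2xz, x₃ ↦ z²`
from `k[x₁,x₂,x₃]` to `k[x,z]` is the principal ideal generated by `Q₀ = x₂² - 4·x₁·x₃`. -/
theorem ker_veronese_substitution {k : Type} [Field k] (h2 : (2 : k) ≠ 0) :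
    RingHom.ker (aeval ![X 0 ^ 2, 2 * X 0 * X 1, X 1 ^ 2] :
        MvPolynomial (Fin 3) k →ₐ[k] MvPolynomial (Fin 2) k)
      = Ideal.span {(X 1 ^ 2 - 4 * X 0 * X 2 : MvPolynomial (Fin 3) k)} := by
  classical
  let e : MvPolynomial (Fin 3) k ≃ₐ[k] Polynomial (MvPolynomial (Fin 2) k) :=
    (renameEquiv k (Equiv.swap 0 1)).trans (finSuccEquiv k 2)
  let Ψ : Polynomial (MvPolynomial (Fin 2) k) →ₐ[k] MvPolynomial (Fin 2) k :=
    Polynomial.aevalTower (expand 2 : MvPolynomial (Fin 2) k →ₐ[k] MvPolynomial (Fin 2) k)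
      (2 * X 0 * X 1)
  let τ : MvPolynomial (Fin 2) k →ₐ[k] MvPolynomial (Fin 2) k := aeval ![-X 0, X 1]
  have hτ0 : τ (X 0) = -X 0 := by simp [τ]
  have hτ1 : τ (X 1) = X 1 := by simp [τ]
  have hτexp : ∀ p : MvPolynomial (Fin 2) k, τ (expand 2 p) = expand 2 p := by
    have h : τ.comp (expand 2 : MvPolynomial (Fin 2) k →ₐ[k] MvPolynomial (Fin 2) k) =
        (expand 2 : MvPolynomial (Fin 2) k →ₐ[k] MvPolynomial (Fin 2) k) := by
      apply algHom_ext
      intro i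
      fin_cases i <;> simp [τ]
    intro p
    exact congrArg (fun f => f p) (congrArg DFunLike.coe h)
  have h0 : e (X 0) = Polynomial.C (X 0) := by
    have hs : (Equiv.swap (0 : Fin 3) 1) 0 = 1 := by decide
    have := MvPolynomial.finSuccEquiv_X_succ (R := k) (n := 2) (j := 0)
    simp only [e, AlgEquiv.trans_apply, renameEquiv_apply, rename_X, hs]
    simpa using this
  have h1 : e (X 1) = Polynomial.X := by
    have hs : (Equiv.swap (0 : Fin 3) 1) 1 = 0 := by decide
    simp only [e, AlgEquiv.trans_apply, renameEquiv_apply, rename_X, hs]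
    exact MvPolynomial.finSuccEquiv_X_zero
  have h22 : e (X 2) = Polynomial.C (X 1) := by
    have hs : (Equiv.swap (0 : Fin 3) 1) 2 = 2 := by decide
    have := MvPolynomial.finSuccEquiv_X_succ (R := k) (n := 2) (j := 1)
    simp only [e, AlgEquiv.trans_apply, renameEquiv_apply, rename_X, hs]
    simpa using this
  have hfact : (aeval ![X 0 ^ 2, 2 * X 0 * X 1, X 1 ^ 2] :
      MvPolynomial (Fin 3) k →ₐ[k] MvPolynomial (Fin 2) k) = Ψ.comp e.toAlgHom := by
    apply algHom_ext
    intro i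
    fin_cases i <;>
      simp [h0, h1, h22, Ψ, Polynomial.aevalTower_X, Polynomial.aevalTower_C]
  set Q : Polynomial (MvPolynomial (Fin 2) k) :=
    Polynomial.X ^ 2 - Polynomial.C (4 * X 0 * X 1) with hQdef
  have heQ : e (X 1 ^ 2 - 4 * X 0 * X 2 : MvPolynomial (Fin 3) k) = Q := by
    rw [map_sub, map_pow, map_mul, map_mul, h1, h0, h22, map_ofNat, hQdef,
      Polynomial.C_mul, Polynomial.C_mul, map_ofNat]
  have hΨQ : Ψ Q = 0 := by
    simp only [Q, Ψ, map_sub, map_pow, Polynomial.aevalTower_X, Polynomial.aevalTower_C,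
      map_mul]
    rw [show ((4 : MvPolynomial (Fin 2) k) = (2:MvPolynomial (Fin 2) k)*2) by norm_num]
    simp only [map_mul, expand_X, map_ofNat]
    ring
  have hkey : ∀ F : Polynomial (MvPolynomial (Fin 2) k), Ψ F = 0 ↔ Q ∣ F := by
    intro F
    constructor
    · intro hF
      have hQm : Q.Monic := Polynomial.monic_X_pow_sub_C _ (by norm_num)
      have hdvd : F %ₘ Q = 0 → Q ∣ F := fun hr =>
        (Polynomial.modByMonic_eq_zero_iff_dvd hQm).mp hr
      apply hdvd
      set r := F %ₘ Q with hr
      have hdeg : r.degree ≤ 1 := by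
        have hlt := Polynomial.degree_modByMonic_lt F hQm
        have hQdeg : Q.degree = 2 := Polynomial.degree_X_pow_sub_C (by norm_num) _
        rw [hQdeg] at hlt
        exact Order.le_of_lt_succ (by exact_mod_cast hlt)
      have hrform := Polynomial.eq_X_add_C_of_degree_le_one hdeg
      set a := r.coeff 0
      set b := r.coeff 1
      have hΨr : Ψ r = 0 := by
        have hmd := Polynomial.modByMonic_add_div F Q
        have h' : Ψ (F %ₘ Q) + Ψ Q * Ψ (F /ₘ Q) = Ψ F := by
          rw [← map_mul, ← map_add, hmd]
        rw [hΨQ, zero_mul, add_zero, hF] at h'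
        exact h'
      rw [hrform] at hΨr
      simp only [map_add, map_mul, Polynomial.aevalTower_X, Polynomial.aevalTower_C, Ψ] at hΨr
      have hτr : expand 2 b * -(2 * X 0 * X 1) + expand 2 a = 0 := by
        have h' := congrArg τ hΨr
        simp only [map_add, map_mul, map_zero, hτexp, hτ0, hτ1, map_ofNat] at h'
        convert h' using 2
        ring
      have h2R : (2 : MvPolynomial (Fin 2) k) ≠ 0 := fun h => h2 (by
        have := congrArg constantCoeff h
        rwa [map_ofNat, map_zero] at this)
      have hb2 : (2 : MvPolynomial (Fin 2) k) * (expand 2 b * (2 * X 0 * X 1)) = 0 := by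
        linear_combination hΨr - hτr
      have hb : b = 0 := by
        apply expand_injective' two_ne_zero
        rcases mul_eq_zero.mp hb2 with h | h
        · exact absurd h h2R
        rcases mul_eq_zero.mp h with h' | h'
        · exact h'
        exfalso
        rcases mul_eq_zero.mp h' with h'' | h''
        · rcases mul_eq_zero.mp h'' with h3 | h3
          · exact h2R h3
          · exact X_ne_zero 0 h3
        · exact X_ne_zero 1 h''
      have ha : a = 0 := by
        apply expand_injective' two_ne_zero
        rw [hb, map_zero, zero_mul, zero_add] at hΨr
        exact hΨr
      rw [hrform, ha, hb]
      simp
    · rintro ⟨t, rfl⟩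
      rw [map_mul, hΨQ, zero_mul]
  ext p
  rw [RingHom.mem_ker, Ideal.mem_span_singleton, hfact]
  simp only [AlgHom.comp_apply, AlgEquiv.toAlgHom_eq_coe, AlgHom.coe_coe]
  change Ψ (e p) = 0 ↔ _
  rw [hkey (e p), ← heQ]
  constructor
  · rintro ⟨t, ht⟩
    exact ⟨e.symm t, by
      apply e.injective
      rw [map_mul, ht]
      simp⟩
  · rintro ⟨t, rfl⟩
    exact ⟨e t, by rw [map_mul]⟩
end
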